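/- Let A be a unital C*-algebra and let N₁, N₂ ∈ A be normal elements. Then the distance between their unitary orbits is at least the Hausdorff distance between their spectra: inf{‖U N₁ U* - V N₂ V*‖ : U, V unitary in A} ≥ d_H(spectrum(N₁), spectrum(N₂)). -/

import Mathlib

set_option linter.unusedSectionVars false

section aux

variable {A : Type*} [NormedRing A] [StarRing A] [CStarRing A] [CompleteSpace A]
    [NormedAlgebra ℂ A] [StarModule ℂ A]

lemma stmt8_aux_normal_sub (lam : ℂ) (a : A) (ha : IsStarNormal a) :
    IsStarNormal (algebraMap ℂ A lam - a) := by
  constructor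
  have h1 : Commute (star a) a := ha.star_comm_self
  have h2 : star (algebraMap ℂ A lam - a) = algebraMap ℂ A (star lam) - star a := by
    rw [star_sub, ← algebraMap_star_comm]
  rw [h2]
  exact (Algebra.commute_algebraMap_left _ _).sub_left
    ((Algebra.commute_algebraMap_right _ _).sub_right h1)

lemma stmt8_aux_normal_inv (c : Aˣ) (h : IsStarNormal (c : A)) :
    IsStarNormal ((↑c⁻¹ : A)) := by
  have hc : Commute (c : A) (star (c : A)) := h.star_comm_self.symm
  let s : Aˣ := ⟨star (c : A), star (↑c⁻¹ : A), by rw [← star_mul, Units.inv_mul, star_one],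
    by rw [← star_mul, Units.mul_inv, star_one]⟩
  have h2 : Commute (↑c⁻¹ : A) (↑s⁻¹ : A) := (hc.units_inv_right).units_inv_left
  exact ⟨h2.symm⟩

lemma stmt8_aux_norm_le (x : A) (hx : IsStarNormal x) {r : NNReal}
    (h : ∀ μ ∈ spectrum ℂ x, ‖μ‖₊ ≤ r) : ‖x‖₊ ≤ r := by
  letI : CStarAlgebra A := { ‹NormedRing A›, ‹StarRing A›, ‹CStarRing A›,
    ‹NormedAlgebra ℂ A›, ‹StarModule ℂ A›, ‹CompleteSpace A› with }
  have h1 : spectralRadius ℂ x = ‖x‖₊ := IsStarNormal.spectralRadius_eq_nnnorm x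
  have h2 : spectralRadius ℂ x ≤ (r : ENNReal) := by
    rw [spectralRadius]
    exact iSup₂_le fun k hk => by exact_mod_cast h k hk
  rw [h1] at h2
  exact_mod_cast h2

/-- Key estimate: if `a` is normal and `lam ∈ spectrum b`, then
`infDist lam (spectrum a) ≤ ‖a - b‖`. -/
lemma stmt8_aux_key (a b : A) (ha : IsStarNormal a) {lam : ℂ}
    (hlam : lam ∈ spectrum ℂ b) :
    Metric.infDist lam (spectrum ℂ a) ≤ ‖a - b‖ := by
  by_contra hcon
  push_neg at hcon
  set d := Metric.infDist lam (spectrum ℂ a) with hd_def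
  have hd : 0 < d := (norm_nonneg _).trans_lt hcon
  -- lam is not in the spectrum of a
  have hnot : lam ∉ spectrum ℂ a := fun hmem => by
    have : d ≤ 0 := le_of_eq (Metric.infDist_zero_of_mem hmem)
    linarith
  have hunit : IsUnit (algebraMap ℂ A lam - a) := spectrum.notMem_iff.mp hnot
  obtain ⟨c, hc⟩ := hunit
  -- c⁻¹ is normal
  have hcn : IsStarNormal (c : A) := hc ▸ stmt8_aux_normal_sub lam a ha
  have hcinvn : IsStarNormal ((↑c⁻¹ : A)) := stmt8_aux_normal_inv c hcn
  -- every point of the spectrum of c⁻¹ has norm ≤ d⁻¹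
  have hspec : ∀ μ ∈ spectrum ℂ ((↑c⁻¹ : A)), ‖μ‖ ≤ d⁻¹ := by
    intro μ hμ
    rw [← spectrum.map_inv] at hμ
    rw [Set.mem_inv] at hμ
    -- μ⁻¹ ∈ spectrum c = {lam} - spectrum a
    have hν : μ⁻¹ ∈ spectrum ℂ (algebraMap ℂ A lam - a) := hc ▸ hμ
    rw [← spectrum.singleton_sub_eq] at hν
    obtain ⟨l, hl, z, hz, hlz⟩ := hν
    rw [Set.mem_singleton_iff] at hl
    subst hl
    have hdist : d ≤ ‖μ⁻¹‖ := by
      rw [← hlz]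
      exact (Metric.infDist_le_dist_of_mem hz).trans_eq (dist_eq_norm _ _)
    rcases eq_or_ne μ 0 with h0 | h0
    · simp [h0, le_of_lt (inv_pos.mpr hd)]
    · rw [norm_inv] at hdist
      calc ‖μ‖ = (‖μ‖⁻¹)⁻¹ := by rw [inv_inv]
        _ ≤ d⁻¹ := by
          apply inv_anti₀ hd hdist
  -- hence ‖c⁻¹‖ ≤ d⁻¹
  have hnorm : ‖(↑c⁻¹ : A)‖ ≤ d⁻¹ := by
    have h1 : ‖(↑c⁻¹ : A)‖₊ ≤ (⟨d⁻¹, le_of_lt (inv_pos.mpr hd)⟩ : NNReal) := by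
      apply stmt8_aux_norm_le _ hcinvn
      intro μ hμ
      exact_mod_cast hspec μ hμ
    exact_mod_cast h1
  -- the perturbation argument
  set t := (↑c⁻¹ : A) * (b - a) with ht_def
  have htlt : ‖t‖ < 1 := by
    calc ‖t‖ ≤ ‖(↑c⁻¹ : A)‖ * ‖b - a‖ := norm_mul_le _ _
      _ ≤ d⁻¹ * ‖b - a‖ := by
          apply mul_le_mul_of_nonneg_right hnorm (norm_nonneg _)
      _ < d⁻¹ * d := by
          apply mul_lt_mul_of_pos_left _ (inv_pos.mpr hd)
          rwa [norm_sub_rev]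
      _ = 1 := inv_mul_cancel₀ hd.ne'
  have hfac : algebraMap ℂ A lam - b = (c : A) * (1 - t) := by
    rw [mul_sub, mul_one, ht_def, ← mul_assoc, Units.mul_inv, one_mul, hc]
    abel
  have : IsUnit (algebraMap ℂ A lam - b) := by
    rw [hfac]
    exact c.isUnit.mul (Units.oneSub t htlt).isUnit
  exact (spectrum.mem_iff.mp hlam) this

end aux

/-- The distance between the unitary orbits of two normal elements of a unital C*-algebra is
at least the Hausdorff distance between their spectra: every pair of elements of the two
unitary orbits is at distance at least `d_H(spectrum N₁, spectrum N₂)`. -/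
theorem stmt8 {A : Type*} [NormedRing A] [StarRing A] [CStarRing A] [CompleteSpace A]
    [NormedAlgebra ℂ A] [StarModule ℂ A]
    (N₁ N₂ : A) (hN₁ : IsStarNormal N₁) (hN₂ : IsStarNormal N₂) :
    ∀ u ∈ unitary A, ∀ v ∈ unitary A,
      Metric.hausdorffDist (spectrum ℂ N₁) (spectrum ℂ N₂) ≤
        ‖u * N₁ * star u - v * N₂ * star v‖ := by
  intro u hu v hv
  set X := u * N₁ * star u with hX
  set Y := v * N₂ * star v with hY
  have hmul : ∀ w : A, w ∈ unitary A → ∀ x y : A,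
      (w * x * star w) * (w * y * star w) = w * (x * y) * star w := by
    intro w hw x y
    have h1 : star w * w = 1 := hw.1
    calc (w * x * star w) * (w * y * star w)
        = w * (x * ((star w * w) * y)) * star w := by simp only [mul_assoc]
      _ = w * (x * y) * star w := by rw [h1, one_mul]
  have hconj : ∀ w : A, w ∈ unitary A → ∀ x : A, IsStarNormal x →
      IsStarNormal (w * x * star w) := by
    intro w hw x hx
    constructor
    have hs : star (w * x * star w) = w * star x * star w := by
      simp only [star_mul, star_star, mul_assoc]
    have hcs := hx.star_comm_self
    have : (w * star x * star w) * (w * x * star w) = (w * x * star w) * (w * star x * star w) :=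
      calc (w * star x * star w) * (w * x * star w) = w * (star x * x) * star w :=
            hmul w hw _ _
        _ = w * (x * star x) * star w := by rw [hcs]
        _ = (w * x * star w) * (w * star x * star w) := (hmul w hw _ _).symm
    rw [hs]
    exact this
  have hXn : IsStarNormal X := hconj u hu N₁ hN₁
  have hYn : IsStarNormal Y := hconj v hv N₂ hN₂
  have hXs : spectrum ℂ X = spectrum ℂ N₁ := Unitary.spectrum_star_right_conjugate (U := ⟨u, hu⟩)
  have hYs : spectrum ℂ Y = spectrum ℂ N₂ := Unitary.spectrum_star_right_conjugate (U := ⟨v, hv⟩)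
  apply Metric.hausdorffDist_le_of_infDist (norm_nonneg _)
  · intro x hx
    rw [← hYs]
    rw [← hXs] at hx
    calc Metric.infDist x (spectrum ℂ Y) ≤ ‖Y - X‖ := stmt8_aux_key Y X hYn hx
      _ = ‖X - Y‖ := norm_sub_rev _ _
  · intro y hy
    rw [← hXs]
    rw [← hYs] at hy
    exact stmt8_aux_key X Y hXn hy
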